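/- Let (X, d) be a compact metric space. The set of non-distal homeomorphism pairs N = {(f, g) ∈ C(X,X) × C(X,X) : g ∘ f = id ∧ f ∘ g = id ∧ ∃ x ≠ y such that for every q ∈ ℕ there exists n ∈ ℕ with d(f^[n] x, f^[n] y) ≤ 1/(q+1) or d(g^[n] x, g^[n] y) ≤ 1/(q+1)} is an analytic subset of C(X,X) × C(X,X). Consequently, within the closed set P of mutually inverse pairs (the Polish space of homeomorphisms of X), the set of distal homeomorphisms is co-analytic. -/

import Mathlib

open MeasureTheory

private lemma continuous_iter_aux (X : Type) [MetricSpace X] [CompactSpace X] (n : ℕ) :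
    Continuous fun q : C(X, X) × X => (⇑q.1)^[n] q.2 := by
  induction n with
  | zero => simpa using continuous_snd
  | succ n ih =>
    have : Continuous fun q : C(X, X) × X => q.1 ((⇑q.1)^[n] q.2) :=
      continuous_eval.comp (continuous_fst.prodMk ih)
    simpa [Function.iterate_succ_apply'] using this

private lemma nondistal_analytic_aux (X : Type) [MetricSpace X] [CompactSpace X] :
    MeasureTheory.AnalyticSet
      {p : C(X, X) × C(X, X) |
        (⇑p.2 ∘ ⇑p.1 = id) ∧ (⇑p.1 ∘ ⇑p.2 = id) ∧
        ∃ x y : X, x ≠ y ∧ ∀ q : ℕ, ∃ n : ℕ,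
          dist ((⇑p.1)^[n] x) ((⇑p.1)^[n] y) ≤ 1 / (q + 1) ∨
          dist ((⇑p.2)^[n] x) ((⇑p.2)^[n] y) ≤ 1 / (q + 1)} := by
  classical
  set S : Set ((C(X, X) × C(X, X)) × X × X) :=
    {z | (⇑z.1.2 ∘ ⇑z.1.1 = id) ∧ (⇑z.1.1 ∘ ⇑z.1.2 = id) ∧ z.2.1 ≠ z.2.2 ∧
      ∀ q : ℕ, ∃ n : ℕ,
        dist ((⇑z.1.1)^[n] z.2.1) ((⇑z.1.1)^[n] z.2.2) ≤ 1 / (q + 1) ∨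
        dist ((⇑z.1.2)^[n] z.2.1) ((⇑z.1.2)^[n] z.2.2) ≤ 1 / (q + 1)} with hS
  have himg :
      {p : C(X, X) × C(X, X) |
        (⇑p.2 ∘ ⇑p.1 = id) ∧ (⇑p.1 ∘ ⇑p.2 = id) ∧
        ∃ x y : X, x ≠ y ∧ ∀ q : ℕ, ∃ n : ℕ,
          dist ((⇑p.1)^[n] x) ((⇑p.1)^[n] y) ≤ 1 / (q + 1) ∨
          dist ((⇑p.2)^[n] x) ((⇑p.2)^[n] y) ≤ 1 / (q + 1)} = Prod.fst '' S := by
    ext p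
    constructor
    · rintro ⟨h1, h2, x, y, hxy, h⟩
      exact ⟨(p, x, y), ⟨h1, h2, hxy, h⟩, rfl⟩
    · rintro ⟨⟨q, x, y⟩, ⟨h1, h2, hxy, h⟩, rfl⟩
      exact ⟨h1, h2, x, y, hxy, h⟩
  rw [himg]
  borelize ((C(X, X) × C(X, X)) × X × X)
  have hmeas : MeasurableSet S := by
    have hiter : ∀ (i : Fin 2) (n : ℕ) (c : ℝ), IsClosed
        {z : (C(X, X) × C(X, X)) × X × X |
          dist ((⇑(if i = 0 then z.1.1 else z.1.2))^[n] z.2.1)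
            ((⇑(if i = 0 then z.1.1 else z.1.2))^[n] z.2.2) ≤ c} := by
      intro i n c
      apply isClosed_le _ continuous_const
      apply Continuous.dist
      · exact (continuous_iter_aux X n).comp
          (((continuous_fst.fst.if_const _ continuous_fst.snd).prodMk
            continuous_snd.fst))
      · exact (continuous_iter_aux X n).comp
          (((continuous_fst.fst.if_const _ continuous_fst.snd).prodMk
            continuous_snd.snd))
    have h1 : IsClosed {z : (C(X, X) × C(X, X)) × X × X | ⇑z.1.2 ∘ ⇑z.1.1 = id} := by
      have : {z : (C(X, X) × C(X, X)) × X × X | ⇑z.1.2 ∘ ⇑z.1.1 = id} =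
          (fun z : (C(X, X) × C(X, X)) × X × X => z.1.2.comp z.1.1) ⁻¹'
            {ContinuousMap.id X} := by
        ext z
        simp only [Set.mem_setOf_eq, Set.mem_preimage, Set.mem_singleton_iff]
        constructor
        · intro h; ext x; exact congrFun h x
        · intro h; funext x
          simpa using congrArg (fun u => ContinuousMap.toFun u x) h
      rw [this]
      exact isClosed_singleton.preimage
        (ContinuousMap.continuous_comp'.comp (continuous_fst.fst.prodMk continuous_fst.snd))
    have h2 : IsClosed {z : (C(X, X) × C(X, X)) × X × X | ⇑z.1.1 ∘ ⇑z.1.2 = id} := by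
      have : {z : (C(X, X) × C(X, X)) × X × X | ⇑z.1.1 ∘ ⇑z.1.2 = id} =
          (fun z : (C(X, X) × C(X, X)) × X × X => z.1.1.comp z.1.2) ⁻¹'
            {ContinuousMap.id X} := by
        ext z
        simp only [Set.mem_setOf_eq, Set.mem_preimage, Set.mem_singleton_iff]
        constructor
        · intro h; ext x; exact congrFun h x
        · intro h; funext x
          simpa using congrArg (fun u => ContinuousMap.toFun u x) h
      rw [this]
      exact isClosed_singleton.preimage
        (ContinuousMap.continuous_comp'.comp (continuous_fst.snd.prodMk continuous_fst.fst))
    have h3 : MeasurableSet {z : (C(X, X) × C(X, X)) × X × X | z.2.1 ≠ z.2.2} := by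
      have : IsOpen {z : (C(X, X) × C(X, X)) × X × X | z.2.1 ≠ z.2.2} :=
        isOpen_ne_fun continuous_snd.fst continuous_snd.snd
      exact this.measurableSet
    have h4 : MeasurableSet {z : (C(X, X) × C(X, X)) × X × X |
        ∀ q : ℕ, ∃ n : ℕ,
          dist ((⇑z.1.1)^[n] z.2.1) ((⇑z.1.1)^[n] z.2.2) ≤ 1 / (q + 1) ∨
          dist ((⇑z.1.2)^[n] z.2.1) ((⇑z.1.2)^[n] z.2.2) ≤ 1 / (q + 1)} := by
      have : {z : (C(X, X) × C(X, X)) × X × X |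
          ∀ q : ℕ, ∃ n : ℕ,
            dist ((⇑z.1.1)^[n] z.2.1) ((⇑z.1.1)^[n] z.2.2) ≤ 1 / (q + 1) ∨
            dist ((⇑z.1.2)^[n] z.2.1) ((⇑z.1.2)^[n] z.2.2) ≤ 1 / (q + 1)} =
          ⋂ q : ℕ, ⋃ n : ℕ,
            ({z : (C(X, X) × C(X, X)) × X × X |
              dist ((⇑z.1.1)^[n] z.2.1) ((⇑z.1.1)^[n] z.2.2) ≤ 1 / (q + 1)} ∪
             {z : (C(X, X) × C(X, X)) × X × X |
              dist ((⇑z.1.2)^[n] z.2.1) ((⇑z.1.2)^[n] z.2.2) ≤ 1 / (q + 1)}) := by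
        ext z
        simp [Set.mem_iInter, Set.mem_iUnion]
      rw [this]
      refine MeasurableSet.iInter fun q => MeasurableSet.iUnion fun n => ?_
      refine MeasurableSet.union ?_ ?_
      · simpa using (hiter 0 n (1 / (q + 1))).measurableSet
      · simpa using (hiter 1 n (1 / (q + 1))).measurableSet
    have : S = _ ∩ (_ ∩ (_ ∩ _)) := rfl
    exact (h1.measurableSet.inter (h2.measurableSet.inter (h3.inter h4)))
  set_option synthInstance.maxHeartbeats 400000 in
  set_option synthInstance.maxSize 1024 in
  exact (hmeas.analyticSet).image_of_continuous continuous_fst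

/-- For a compact metric space `X`, the set of non-distal homeomorphism pairs (pairs of
mutually inverse continuous maps admitting a proximal pair of distinct points) is analytic
in `C(X,X) × C(X,X)`; consequently, within the closed set of mutually inverse pairs (the
Polish space of homeomorphisms of `X`), the set of distal homeomorphisms is co-analytic
(its complement there is analytic). -/
theorem nondistal_analytic_distal_coanalytic
    (X : Type) [MetricSpace X] [CompactSpace X] :
    MeasureTheory.AnalyticSet
      {p : C(X, X) × C(X, X) |
        (⇑p.2 ∘ ⇑p.1 = id) ∧ (⇑p.1 ∘ ⇑p.2 = id) ∧
        ∃ x y : X, x ≠ y ∧ ∀ q : ℕ, ∃ n : ℕ,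
          dist ((⇑p.1)^[n] x) ((⇑p.1)^[n] y) ≤ 1 / (q + 1) ∨
          dist ((⇑p.2)^[n] x) ((⇑p.2)^[n] y) ≤ 1 / (q + 1)} ∧
    MeasureTheory.AnalyticSet
      ({p : C(X, X) × C(X, X) | (⇑p.2 ∘ ⇑p.1 = id) ∧ (⇑p.1 ∘ ⇑p.2 = id)} \
        {p : C(X, X) × C(X, X) |
          (⇑p.2 ∘ ⇑p.1 = id) ∧ (⇑p.1 ∘ ⇑p.2 = id) ∧
          ∀ x y : X, x ≠ y → ∃ q : ℕ, ∀ n : ℕ,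
            dist ((⇑p.1)^[n] x) ((⇑p.1)^[n] y) > 1 / (q + 1) ∧
            dist ((⇑p.2)^[n] x) ((⇑p.2)^[n] y) > 1 / (q + 1)}) := by
  have hN := nondistal_analytic_aux X
  refine ⟨hN, ?_⟩
  have heq : ({p : C(X, X) × C(X, X) | (⇑p.2 ∘ ⇑p.1 = id) ∧ (⇑p.1 ∘ ⇑p.2 = id)} \
        {p : C(X, X) × C(X, X) |
          (⇑p.2 ∘ ⇑p.1 = id) ∧ (⇑p.1 ∘ ⇑p.2 = id) ∧
          ∀ x y : X, x ≠ y → ∃ q : ℕ, ∀ n : ℕ,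
            dist ((⇑p.1)^[n] x) ((⇑p.1)^[n] y) > 1 / (q + 1) ∧
            dist ((⇑p.2)^[n] x) ((⇑p.2)^[n] y) > 1 / (q + 1)}) =
      {p : C(X, X) × C(X, X) |
        (⇑p.2 ∘ ⇑p.1 = id) ∧ (⇑p.1 ∘ ⇑p.2 = id) ∧
        ∃ x y : X, x ≠ y ∧ ∀ q : ℕ, ∃ n : ℕ,
          dist ((⇑p.1)^[n] x) ((⇑p.1)^[n] y) ≤ 1 / (q + 1) ∨
          dist ((⇑p.2)^[n] x) ((⇑p.2)^[n] y) ≤ 1 / (q + 1)} := by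
    ext p
    simp only [Set.mem_diff, Set.mem_setOf_eq]
    constructor
    · rintro ⟨⟨h1, h2⟩, hnot⟩
      refine ⟨h1, h2, ?_⟩
      push_neg at hnot
      obtain ⟨x, y, hxy, h⟩ := hnot h1 h2
      refine ⟨x, y, hxy, fun q => ?_⟩
      obtain ⟨n, hn⟩ := h q
      rcases le_or_gt (dist ((⇑p.1)^[n] x) ((⇑p.1)^[n] y)) (1 / (q + 1)) with h' | h'
      · exact ⟨n, Or.inl h'⟩
      · exact ⟨n, Or.inr (hn h')⟩
    · rintro ⟨h1, h2, x, y, hxy, h⟩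
      refine ⟨⟨h1, h2⟩, ?_⟩
      rintro ⟨-, -, hall⟩
      obtain ⟨q, hq⟩ := hall x y hxy
      obtain ⟨n, hn⟩ := h q
      rcases hn with hn | hn
      · exact absurd (hq n).1 (not_lt.mpr hn)
      · exact absurd (hq n).2 (not_lt.mpr hn)
  rw [heq]
  exact hN
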